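/- Let n, t be complex numbers with t ≠ 0. (i) If q, p are complex numbers with qp+n ≠ 0 and q(p+t)+n ≠ 0, and x = (q(p+t)+n)/(qp+n), y = (p+t)(qp+n)/t, then x ≠ 0, (x−1)y+n ≠ 0, and (x−1)·((x−1)y+n)/(tx) = q and t(y−n)/((x−1)y+n) = p. (ii) Conversely, if x, y are complex numbers with x ≠ 0 and (x−1)y+n ≠ 0, and q = (x−1)·((x−1)y+n)/(tx), p = t(y−n)/((x−1)y+n), then qp+n ≠ 0, q(p+t)+n ≠ 0, and (q(p+t)+n)/(qp+n) = x and (p+t)(qp+n)/t = y. -/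

import Mathlib

/-- The change of variables `x = (q(p+t)+n)/(qp+n)`, `y = (p+t)(qp+n)/t` between
the Laguerre-weight recurrence coordinates `(x,y)` and the standard discrete Painlevé coordinates
`(q,p)` on the `D₅⁽¹⁾` surface, and its inverse `q = (x−1)((x−1)y+n)/(tx)`,
`p = t(y−n)/((x−1)y+n)`, are mutually inverse wherever defined. -/
theorem laguerre_coordinate_change_inverse (n t : ℂ) (ht : t ≠ 0) :
    (∀ q p x y : ℂ, q * p + n ≠ 0 → q * (p + t) + n ≠ 0 →
      x = (q * (p + t) + n) / (q * p + n) → y = (p + t) * (q * p + n) / t →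
      x ≠ 0 ∧ (x - 1) * y + n ≠ 0 ∧
        (x - 1) * ((x - 1) * y + n) / (t * x) = q ∧
        t * (y - n) / ((x - 1) * y + n) = p) ∧
    (∀ x y q p : ℂ, x ≠ 0 → (x - 1) * y + n ≠ 0 →
      q = (x - 1) * ((x - 1) * y + n) / (t * x) → p = t * (y - n) / ((x - 1) * y + n) →
      q * p + n ≠ 0 ∧ q * (p + t) + n ≠ 0 ∧
        (q * (p + t) + n) / (q * p + n) = x ∧
        (p + t) * (q * p + n) / t = y) := by
  constructor
  · intro q p x y hB hA hx hy
    subst hx hy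
    have hx0 : (q * (p + t) + n) / (q * p + n) ≠ 0 := div_ne_zero hA hB
    have key : ((q * (p + t) + n) / (q * p + n) - 1) * ((p + t) * (q * p + n) / t) + n
        = q * (p + t) + n := by
      field_simp
      ring
    refine ⟨hx0, ?_, ?_, ?_⟩
    · rw [key]; exact hA
    · rw [key]
      field_simp
      ring
    · rw [key]
      rw [div_eq_iff hA]
      field_simp
      ring
  · intro x y q p hx hC hq hp
    subst hq hp
    have h1 : (x - 1) * ((x - 1) * y + n) / (t * x) *
        (t * (y - n) / ((x - 1) * y + n)) + n = ((x - 1) * y + n) / x := by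
      field_simp
      ring
    have h2 : (x - 1) * ((x - 1) * y + n) / (t * x) *
        (t * (y - n) / ((x - 1) * y + n) + t) + n = (x - 1) * y + n := by
      field_simp
      ring
    refine ⟨?_, ?_, ?_, ?_⟩
    · rw [h1]; exact div_ne_zero hC hx
    · rw [h2]; exact hC
    · rw [h1, h2]
      field_simp
    · rw [h1]
      rw [div_eq_iff ht, div_add' _ _ _ hC, div_mul_div_comm, div_eq_iff (mul_ne_zero hC hx)]
      ring
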